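/- Let p be a prime with p ≡ 1 (mod 4). Then G_p(p) = ∑_{a=1}^{p-1} ∑_{b=1}^{p-1} (a+bi)^p satisfies G_p(p) ≡ p²(1+i) (mod p³) in ℤ[i]. Equivalently, v_p(G_p(p)) = 2 and G_p(p)/p² ≡ 1+i (mod p). -/

import Mathlib

noncomputable section

/-- `i` in the Gaussian integers. -/
def Ig : GaussianInt := ⟨0, 1⟩

/-- Classical power sum `S_r(N) = ∑_{t=1}^N t^r`. -/
def Sps (r N : ℕ) : ℤ := ∑ t ∈ Finset.Icc 1 N, (t : ℤ) ^ r

/-- Gaussian power sum `F_n(k,m) = ∑_{a=1}^k ∑_{b=1}^m (a+bi)^n`. -/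
def Fg (n k m : ℕ) : GaussianInt :=
  ∑ a ∈ Finset.Icc 1 k, ∑ b ∈ Finset.Icc 1 m, ((a : GaussianInt) + (b : GaussianInt) * Ig) ^ n

/-- Square Gaussian power sum `G_n(N) = F_n(N-1,N-1)`. -/
def Gg (n N : ℕ) : GaussianInt := Fg n (N - 1) (N - 1)

open Finset

lemma sum_univ_zmod {p : ℕ} [NeZero p] {M : Type*} [AddCommMonoid M] (f : ZMod p → M) :
    ∑ x : ZMod p, f x = ∑ i ∈ Finset.range p, f i := by
  refine Finset.sum_nbij' (fun x => x.val) (fun i => (i : ZMod p)) ?_ ?_ ?_ ?_ ?_ <;>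
    simp only [ZMod.val_lt, ZMod.natCast_val, ZMod.val_natCast, ZMod.cast_id, Finset.mem_range,
      Finset.mem_univ, implies_true]
  exact fun a ha => Nat.mod_eq_of_lt ha

lemma sps_range (r N : ℕ) (hr : r ≠ 0) : Sps r N = ∑ t ∈ Finset.range (N + 1), (t : ℤ) ^ r := by
  rw [Finset.range_eq_Ico, Finset.sum_eq_sum_Ico_succ_bot (Nat.succ_pos N)]
  simp [Sps, zero_pow hr, ← Finset.Ico_add_one_right_eq_Icc]

lemma sps_cast (p : ℕ) [hp : Fact p.Prime] (r : ℕ) (hr : r ≠ 0) :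
    ((Sps r (p - 1) : ℤ) : ZMod p) = ∑ x : ZMod p, x ^ r := by
  have h1 : p - 1 + 1 = p := Nat.succ_pred_eq_of_pos hp.out.pos
  rw [sps_range r _ hr, sum_univ_zmod (fun x : ZMod p => x ^ r), h1]
  push_cast
  rfl

lemma lemA (p : ℕ) [hp : Fact p.Prime] (r : ℕ) (hr : r ≠ 0) (hr2 : r < p - 1) :
    (p : ℤ) ∣ Sps r (p - 1) := by
  rw [← ZMod.intCast_zmod_eq_zero_iff_dvd, sps_cast p r hr]
  have := FiniteField.sum_pow_lt_card_sub_one (K := ZMod p) r (by rwa [ZMod.card])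
  exact this

lemma lemB (p : ℕ) [hp : Fact p.Prime] :
    ((Sps (p - 1) (p - 1) : ℤ) : ZMod p) = -1 := by
  have h1 : (1 : ℕ) ≤ p := hp.out.one_lt.le
  have hne : p - 1 ≠ 0 := by have := hp.out.two_le; omega
  rw [sps_cast p _ hne]
  classical
  have : ∀ x : ZMod p, x ^ (p - 1) = if x = 0 then 0 else 1 := by
    intro x
    split_ifs with h
    · simp [h, zero_pow hne]
    · exact ZMod.pow_card_sub_one_eq_one h
  rw [Finset.sum_congr rfl (fun x _ => this x)]
  rw [Finset.sum_eq_sum_sdiff_singleton_add (Finset.mem_univ (0 : ZMod p))]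
  rw [Finset.sum_congr rfl (fun x hx => by
    rw [if_neg (by simpa using (Finset.mem_sdiff.mp hx).2)])]
  simp only [if_pos rfl, add_zero, Finset.sum_const, nsmul_eq_mul, mul_one]
  rw [Finset.card_sdiff_of_subset (by simp), Finset.card_univ, ZMod.card, Finset.card_singleton]
  push_cast [Nat.cast_sub h1]
  simp

lemma lemC (p : ℕ) (h1 : 1 ≤ p) : 2 * Sps 1 (p - 1) = p * (p - 1 : ℕ) := by
  rw [sps_range 1 _ one_ne_zero, (by omega : p - 1 + 1 = p)]
  have := Finset.sum_range_id_mul_two p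
  have hcast : (∑ t ∈ Finset.range p, (t : ℤ) ^ 1) = ((∑ i ∈ Finset.range p, i : ℕ) : ℤ) := by
    push_cast; simp
  rw [hcast]
  rw [mul_comm]
  rw [← Nat.cast_ofNat, ← Nat.cast_mul, this]
  push_cast
  ring

lemma reflect_pow (p : ℕ) (hp : p.Prime) (hodd : p % 2 = 1) (hp2 : 2 < p) (t : ℤ) :
    ((p : ℤ)) ^ 3 ∣ (t ^ p + ((p : ℤ) - t) ^ p - (p : ℤ) ^ 2 * t ^ (p - 1)) := by
  have hexp : ((p : ℤ) - t) ^ p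
      = ∑ j ∈ Finset.range (p + 1), (p : ℤ) ^ j * (-t) ^ (p - j) * (p.choose j : ℤ) := by
    rw [sub_eq_add_neg, add_pow]
  rw [hexp, Finset.sum_range_succ',
    (by rw [Nat.sub_add_cancel hp.one_lt.le] : Finset.range p = Finset.range (p - 1 + 1)),
    Finset.sum_range_succ']
  have hoddp : Odd p := Nat.odd_iff.mpr hodd
  have heven : Even (p - 1) := by
    rcases hoddp with ⟨m, hm⟩; exact ⟨m, by omega⟩
  have hf0 : (p : ℤ) ^ 0 * (-t) ^ (p - 0) * (p.choose 0 : ℤ) = -(t ^ p) := by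
    simp [hoddp.neg_pow]
  have hf1 : (p : ℤ) ^ (0 + 1) * (-t) ^ (p - (0 + 1)) * (p.choose (0 + 1) : ℤ)
      = (p : ℤ) ^ 2 * t ^ (p - 1) := by
    simp [heven.neg_pow, Nat.choose_one_right]
    ring
  rw [hf0, hf1]
  have hkey : ∀ j ∈ Finset.range (p - 1),
      ((p : ℤ)) ^ 3 ∣ (p : ℤ) ^ (j + 1 + 1) * (-t) ^ (p - (j + 1 + 1))
        * (p.choose (j + 1 + 1) : ℤ) := by
    intro j hj
    rcases Nat.eq_zero_or_pos j with rfl | hjpos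
    · obtain ⟨c, hc⟩ : (p : ℤ) ∣ (p.choose 2 : ℤ) :=
        Int.natCast_dvd_natCast.mpr (hp.dvd_choose_self (by norm_num) hp2)
      refine ⟨(-t) ^ (p - (0 + 1 + 1)) * c, ?_⟩
      have h2 : ((p.choose (0 + 1 + 1) : ℤ)) = (p : ℤ) * c := hc
      rw [h2]; ring
    · have h3 : (p : ℤ) ^ 3 ∣ (p : ℤ) ^ (j + 1 + 1) := pow_dvd_pow _ (by omega)
      exact (h3.mul_right _).mul_right _
  have hsum := Finset.dvd_sum hkey
  have : t ^ p + ((∑ j ∈ Finset.range (p - 1), (p : ℤ) ^ (j + 1 + 1)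
        * (-t) ^ (p - (j + 1 + 1)) * (p.choose (j + 1 + 1) : ℤ))
      + (p : ℤ) ^ 2 * t ^ (p - 1) + -(t ^ p)) - (p : ℤ) ^ 2 * t ^ (p - 1)
      = ∑ j ∈ Finset.range (p - 1), (p : ℤ) ^ (j + 1 + 1)
        * (-t) ^ (p - (j + 1 + 1)) * (p.choose (j + 1 + 1) : ℤ) := by ring
  rw [this]
  exact hsum

lemma lemD (p : ℕ) (hp : p.Prime) (hodd : p % 2 = 1) (hp2 : 2 < p) :
    (p : ℤ) ^ 3 ∣ 2 * Sps p (p - 1) - (p : ℤ) ^ 2 * Sps (p - 1) (p - 1) := by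
  have hrefl : (∑ t ∈ Finset.Icc 1 (p - 1), ((p : ℤ) - (t : ℤ)) ^ p) = Sps p (p - 1) := by
    refine Finset.sum_nbij' (fun t => p - t) (fun t => p - t) ?_ ?_ ?_ ?_ ?_ <;>
      simp only [Finset.mem_Icc] <;> intro a ha
    · omega
    · omega
    · omega
    · omega
    · rw [Nat.cast_sub (by omega : a ≤ p)]
  have heq : 2 * Sps p (p - 1) - (p : ℤ) ^ 2 * Sps (p - 1) (p - 1)
      = ∑ t ∈ Finset.Icc 1 (p - 1),
          ((t : ℤ) ^ p + ((p : ℤ) - (t : ℤ)) ^ p - (p : ℤ) ^ 2 * (t : ℤ) ^ (p - 1)) := by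
    rw [Finset.sum_sub_distrib, Finset.sum_add_distrib, hrefl, ← Finset.mul_sum]
    show 2 * Sps p (p - 1) - (p : ℤ) ^ 2 * Sps (p - 1) (p - 1)
      = Sps p (p - 1) + Sps p (p - 1) - (p : ℤ) ^ 2 * Sps (p - 1) (p - 1)
    ring
  rw [heq]
  exact Finset.dvd_sum fun t _ => reflect_pow p hp hodd hp2 (t : ℤ)

lemma Gg_eq (p : ℕ) :
    Gg p p = ∑ k ∈ Finset.range (p + 1),
      ((Sps k (p - 1) : ℤ) : GaussianInt) * ((Sps (p - k) (p - 1) : ℤ) : GaussianInt)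
        * Ig ^ (p - k) * (p.choose k : GaussianInt) := by
  simp only [Gg, Fg, add_pow, mul_pow]
  rw [Finset.sum_congr rfl fun a (_ : a ∈ Finset.Icc 1 (p - 1)) =>
    (Finset.sum_comm (s := Finset.Icc 1 (p - 1)) (t := Finset.range (p + 1))
      (f := fun b k => (a : GaussianInt) ^ k
        * ((b : GaussianInt) ^ (p - k) * Ig ^ (p - k)) * (p.choose k : GaussianInt))),
    Finset.sum_comm]
  refine Finset.sum_congr rfl fun k _ => ?_
  have : ((Sps k (p - 1) : ℤ) : GaussianInt) * ((Sps (p - k) (p - 1) : ℤ) : GaussianInt)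
      = ∑ a ∈ Finset.Icc 1 (p - 1), ∑ b ∈ Finset.Icc 1 (p - 1),
        (a : GaussianInt) ^ k * (b : GaussianInt) ^ (p - k) := by
    rw [← Finset.sum_mul_sum]
    simp only [Sps]
    push_cast
    rfl
  rw [this, Finset.sum_mul, Finset.sum_mul]
  refine Finset.sum_congr rfl fun a _ => ?_
  rw [Finset.sum_mul, Finset.sum_mul]
  exact Finset.sum_congr rfl fun b _ => by ring

lemma sps_zero (N : ℕ) : Sps 0 N = N := by simp [Sps]

lemma Ig_sq : Ig * Ig = -1 := by
  ext <;> simp [Ig, Zsqrtd.re_mul, Zsqrtd.im_mul]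

lemma Ig_four : Ig ^ 4 = 1 := by
  have : Ig ^ 4 = (Ig * Ig) * (Ig * Ig) := by ring
  rw [this, Ig_sq]; ring

lemma M_cong (p : ℕ) (hp : p.Prime) (h1 : p % 4 = 1) :
    (p : ℤ) ^ 3 ∣ (((p : ℤ) - 1) * Sps p (p - 1)
      + (p : ℤ) * Sps 1 (p - 1) * Sps (p - 1) (p - 1)) - (p : ℤ) ^ 2 := by
  haveI : Fact p.Prime := ⟨hp⟩
  have hp5 : 5 ≤ p := by have := hp.two_le; omega
  obtain ⟨d, hd⟩ := lemD p hp (by omega) (by omega)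
  have hC : 2 * Sps 1 (p - 1) = (p : ℤ) * ((p : ℤ) - 1) := by
    rw [lemC p (by omega)]; push_cast [Nat.cast_sub hp.one_lt.le]; ring
  obtain ⟨e, he⟩ : (p : ℤ) ∣ Sps (p - 1) (p - 1) + 1 := by
    rw [← ZMod.intCast_zmod_eq_zero_iff_dvd]
    push_cast [lemB p]
    ring
  have key : 2 * ((((p : ℤ) - 1) * Sps p (p - 1)
      + (p : ℤ) * Sps 1 (p - 1) * Sps (p - 1) (p - 1)) - (p : ℤ) ^ 2)
      = (p : ℤ) ^ 3 * (2 * ((p : ℤ) - 1) * e - 2 + ((p : ℤ) - 1) * d) := by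
    linear_combination ((p : ℤ) - 1) * hd + (p : ℤ) * Sps (p - 1) (p - 1) * hC
      + 2 * (p : ℤ) ^ 2 * ((p : ℤ) - 1) * he
  have hcop : IsCoprime ((p : ℤ) ^ 3) 2 := by
    refine IsCoprime.pow_left ?_
    rw [Int.isCoprime_iff_gcd_eq_one]
    exact (Nat.coprime_primes hp Nat.prime_two).mpr (by omega)
  exact hcop.dvd_of_dvd_mul_left ⟨_, key⟩

theorem part1 (p : ℕ) (hp : p.Prime) (h1 : p % 4 = 1) :
    (p : GaussianInt) ^ 3 ∣ (Gg p p - (p : GaussianInt) ^ 2 * (1 + Ig)) := by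
  haveI : Fact p.Prime := ⟨hp⟩
  have hp5 : 5 ≤ p := by have := hp.two_le; omega
  have hIp1 : Ig ^ (p - 1) = 1 := by
    obtain ⟨m, hm⟩ : 4 ∣ p - 1 := by omega
    rw [hm, pow_mul, Ig_four, one_pow]
  have hIp : Ig ^ p = Ig := by
    conv_lhs => rw [show p = (p - 1) + 1 by omega]
    rw [pow_succ, hIp1, one_mul]
  rw [Gg_eq p]
  set f : ℕ → GaussianInt := fun k =>
    ((Sps k (p - 1) : ℤ) : GaussianInt) * ((Sps (p - k) (p - 1) : ℤ) : GaussianInt)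
      * Ig ^ (p - k) * (p.choose k : GaussianInt) with hf
  have hsub : ({0, 1, p - 1, p} : Finset ℕ) ⊆ Finset.range (p + 1) := by
    intro k hk
    simp only [Finset.mem_insert, Finset.mem_singleton] at hk
    simp only [Finset.mem_range]
    omega
  rw [← Finset.sum_sdiff hsub]
  have hX : (p : GaussianInt) ^ 3 ∣
      ∑ k ∈ Finset.range (p + 1) \ ({0, 1, p - 1, p} : Finset ℕ), f k := by
    refine Finset.dvd_sum fun k hk => ?_
    obtain ⟨hk1, hk2⟩ := Finset.mem_sdiff.mp hk
    simp only [Finset.mem_range] at hk1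
    simp only [Finset.mem_insert, Finset.mem_singleton, not_or] at hk2
    obtain ⟨hk0, hk1', hkp1, hkp⟩ := hk2
    obtain ⟨c1, hc1⟩ := lemA p k hk0 (by omega)
    obtain ⟨c2, hc2⟩ := lemA p (p - k) (by omega) (by omega)
    obtain ⟨c3, hc3⟩ := hp.dvd_choose_self hk0 (by omega)
    refine ⟨(c1 : GaussianInt) * (c2 : GaussianInt) * Ig ^ (p - k) * (c3 : GaussianInt), ?_⟩
    rw [hf]
    simp only []
    rw [hc1, hc2, hc3]
    push_cast
    ring
  have hY : ∑ k ∈ ({0, 1, p - 1, p} : Finset ℕ), f k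
      = (1 + Ig) * (((((p : ℤ) - 1) * Sps p (p - 1)
        + (p : ℤ) * Sps 1 (p - 1) * Sps (p - 1) (p - 1)) : ℤ) : GaussianInt) := by
    have hd1 : (0 : ℕ) ∉ ({1, p - 1, p} : Finset ℕ) := by simp; omega
    have hd2 : (1 : ℕ) ∉ ({p - 1, p} : Finset ℕ) := by simp; omega
    have hd3 : (p - 1 : ℕ) ∉ ({p} : Finset ℕ) := by simp; omega
    rw [show ({0, 1, p - 1, p} : Finset ℕ)
        = insert 0 (insert 1 (insert (p - 1) ({p} : Finset ℕ))) from rfl,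
      Finset.sum_insert hd1, Finset.sum_insert hd2, Finset.sum_insert hd3,
      Finset.sum_singleton]
    rw [hf]
    simp only []
    rw [Nat.sub_zero, Nat.sub_self, Nat.sub_sub_self hp.one_lt.le,
      Nat.choose_zero_right, Nat.choose_one_right, Nat.choose_self]
    have hch : p.choose (p - 1) = p := by
      rw [Nat.choose_symm hp.one_lt.le, Nat.choose_one_right]
    rw [hch, sps_zero, hIp, hIp1]
    push_cast [Nat.cast_sub hp.one_lt.le]
    ring
  rw [hY]
  have hM := M_cong p hp h1
  have hMG : (p : GaussianInt) ^ 3 ∣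
      (((((p : ℤ) - 1) * Sps p (p - 1)
        + (p : ℤ) * Sps 1 (p - 1) * Sps (p - 1) (p - 1)) - (p : ℤ) ^ 2 : ℤ) : GaussianInt) := by
    have h2 := map_dvd (Int.castRingHom GaussianInt) hM
    simp only [map_pow, Int.coe_castRingHom] at h2
    convert h2 using 2
    exact (Int.cast_natCast p).symm
  have hre : ∑ k ∈ Finset.range (p + 1) \ ({0, 1, p - 1, p} : Finset ℕ), f k
        + (1 + Ig) * (((((p : ℤ) - 1) * Sps p (p - 1)
          + (p : ℤ) * Sps 1 (p - 1) * Sps (p - 1) (p - 1)) : ℤ) : GaussianInt)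
        - (p : GaussianInt) ^ 2 * (1 + Ig)
      = ∑ k ∈ Finset.range (p + 1) \ ({0, 1, p - 1, p} : Finset ℕ), f k
        + (1 + Ig) * (((((p : ℤ) - 1) * Sps p (p - 1)
          + (p : ℤ) * Sps 1 (p - 1) * Sps (p - 1) (p - 1)) - (p : ℤ) ^ 2 : ℤ) : GaussianInt) := by
    push_cast
    ring
  rw [hre]
  exact dvd_add hX (hMG.mul_left _)

lemma val_eq (p : ℕ) [hpf : Fact p.Prime] (hp5 : 5 ≤ p) (a : ℤ)
    (h : (p : ℤ) ^ 3 ∣ a - (p : ℤ) ^ 2) : padicValInt p a = 2 := by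
  obtain ⟨x, hx⟩ := h
  have ha : a = (p : ℤ) ^ 2 * (1 + p * x) := by linear_combination hx
  have hnd : ¬ (p : ℤ) ∣ (1 + p * x) := by
    rintro ⟨c, hc⟩
    have h1 : (1 : ℤ) = p * (c - x) := by linear_combination hc
    have h2 : (p : ℤ) ∣ 1 := ⟨_, h1⟩
    have h3 := Int.le_of_dvd one_pos h2
    have : (5 : ℤ) ≤ p := by exact_mod_cast hp5
    omega
  have hne : (1 + (p : ℤ) * x) ≠ 0 := fun h0 => hnd (h0 ▸ dvd_zero _)
  rw [ha, padicValInt.mul (pow_ne_zero 2 (by exact_mod_cast hpf.out.ne_zero)) hne]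
  rw [show ((p : ℤ) ^ 2) = ((p ^ 2 : ℕ) : ℤ) by push_cast; ring,
    padicValInt.of_nat, padicValNat.prime_pow, padicValInt.eq_zero_of_not_dvd hnd]

theorem stmt14 (p : ℕ) (hp : p.Prime) (h1 : p % 4 = 1) :
    (p : GaussianInt) ^ 3 ∣ (Gg p p - (p : GaussianInt) ^ 2 * (1 + Ig)) ∧
    min (padicValInt p (Gg p p).re) (padicValInt p (Gg p p).im) = 2 := by
  have hdvd := part1 p hp h1
  refine ⟨hdvd, ?_⟩
  haveI : Fact p.Prime := ⟨hp⟩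
  have hp5 : 5 ≤ p := by have := hp.two_le; omega
  have hdvd' : (((p : ℤ) ^ 3 : ℤ) : GaussianInt)
      ∣ (Gg p p - (p : GaussianInt) ^ 2 * (1 + Ig)) := by push_cast; exact hdvd
  rw [Zsqrtd.intCast_dvd] at hdvd'
  obtain ⟨hre, him⟩ := hdvd'
  have hsq : ((p : GaussianInt) ^ 2 * (1 + Ig)).re = (p : ℤ) ^ 2 ∧
      ((p : GaussianInt) ^ 2 * (1 + Ig)).im = (p : ℤ) ^ 2 := by
    have h2 : (p : GaussianInt) ^ 2 * (1 + Ig) = (⟨(p : ℤ) ^ 2, (p : ℤ) ^ 2⟩ : GaussianInt) := by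
      have h3 : (p : GaussianInt) = (⟨(p : ℤ), 0⟩ : GaussianInt) := by ext <;> simp
      rw [h3]
      ext <;> simp [Ig, Zsqrtd.re_mul, Zsqrtd.im_mul, pow_two,
        Zsqrtd.re_add, Zsqrtd.im_add] <;> ring
    rw [h2]
    exact ⟨rfl, rfl⟩
  rw [Zsqrtd.re_sub, hsq.1] at hre
  rw [Zsqrtd.im_sub, hsq.2] at him
  rw [val_eq p hp5 _ hre, val_eq p hp5 _ him]
  exact min_self 2
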